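/- arXiv:1807.03020 — 4 statements merged into one kernel-verified Lean document; each statement's English description precedes it below -/
import Mathlib

section
/- Every countable torsion-free abelian group belongs to the class 𝔉. -/
/-- The closure properties defining the bootstrap class `𝔉` of countable discrete groups:
it contains the trivial group, and is closed under isomorphism, countable directed
unions of subgroups, and extensions by `ℤ`. -/
structure IsFrakCClosed (C : ∀ (G : Type) [Group G], Prop) : Prop where
  /-- `C` contains the trivial group. -/
  triv : C PUnit
  /-- `C` is closed under isomorphism of groups. -/
  iso : ∀ (G H : Type) [Group G] [Group H], (G ≃* H) → C G → C H
  /-- `C` is closed under countable directed unions: if `G` is the union of a countable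
  directed family of subgroups each belonging to `C`, then `G` belongs to `C`. -/
  union : ∀ (G : Type) [Group G] (ι : Type) [Countable ι] (K : ι → Subgroup G),
    Directed (· ≤ ·) K → (∀ i, C (K i)) → (∀ g : G, ∃ i, g ∈ K i) → C G
  /-- `C` is closed under extensions by `ℤ`: if `G` has a normal subgroup `N` belonging
  to `C` with `G ⧸ N ≅ ℤ`, then `G` belongs to `C`. -/
  extZ : ∀ (G : Type) [Group G] (N : Subgroup G) [N.Normal],
    C N → ((G ⧸ N) ≃* Multiplicative ℤ) → C G

/-- Membership in the smallest class `𝔉` of groups containing the trivial group and closed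
under isomorphism, countable directed unions, and extensions by `ℤ`. -/
def MemFrakC (G : Type) [Group G] : Prop :=
  ∀ C : ∀ (G : Type) [Group G], Prop, IsFrakCClosed C → C G

lemma memFrakC_of_mulEquiv {G H : Type} [Group G] [Group H] (e : G ≃* H)
    (hG : MemFrakC G) : MemFrakC H :=
  fun C hC => hC.iso G H e (hG C hC)

/-- `𝔉` is closed under taking products with `ℤ`. -/
lemma memFrakC_prod_int (G : Type) [Group G] (hG : MemFrakC G) :
    MemFrakC (G × Multiplicative ℤ) := by
  intro C hC
  set π := MonoidHom.snd G (Multiplicative ℤ) with hπ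
  have hsurj : Function.Surjective π := fun z => ⟨(1, z), rfl⟩
  have eker : G ≃* π.ker :=
    { toFun := fun g => ⟨(g, 1), MonoidHom.mem_ker.mpr rfl⟩
      invFun := fun x => x.1.1
      left_inv := fun g => rfl
      right_inv := fun x => by
        have h2 : x.1.2 = 1 := x.2
        ext
        · rfl
        · exact h2.symm
      map_mul' := fun a b => by
        ext <;> simp }
  exact hC.extZ _ π.ker (hC.iso G _ eker (hG C hC))
    (QuotientGroup.quotientKerEquivOfSurjective π hsurj)

/-- The additive equivalence splitting off the last coordinate. -/
def finSuccAddEquiv (n : ℕ) : (Fin (n + 1) → ℤ) ≃+ (Fin n → ℤ) × ℤ where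
  toFun f := (fun i => f i.castSucc, f (Fin.last n))
  invFun p := Fin.snoc p.1 p.2
  left_inv f := Fin.snoc_init_self f
  right_inv p := by
    ext i
    · simp
    · simp
  map_add' f g := rfl

/-- Every finite power of `ℤ` is in `𝔉`. -/
lemma memFrakC_int_pow : ∀ n : ℕ, MemFrakC (Multiplicative (Fin n → ℤ))
  | 0 => fun C hC => hC.iso PUnit _ MulEquiv.ofUnique hC.triv
  | (n + 1) => by
    have e : Multiplicative (Fin (n + 1) → ℤ) ≃*
        Multiplicative (Fin n → ℤ) × Multiplicative ℤ :=
      (AddEquiv.toMultiplicative (finSuccAddEquiv n)).trans (MulEquiv.prodMultiplicative (Fin n → ℤ) ℤ)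
    exact memFrakC_of_mulEquiv e.symm
      (memFrakC_prod_int _ (memFrakC_int_pow n))

/-- Every finitely generated torsion-free abelian group is in `𝔉`. -/
lemma memFrakC_of_fg_torsionFree (H : Type) [CommGroup H] [Group.FG H]
    (htf : ∀ (g : H) (m : ℕ), 1 ≤ m → g ^ m = 1 → g = 1) : MemFrakC H := by
  -- pass to the additive group `Additive H`, a f.g. torsion-free `ℤ`-module
  haveI : Module.Finite ℤ (Additive H) :=
    Module.Finite.iff_addGroup_fg.mpr inferInstance
  haveI htf' : IsAddTorsionFree (Additive H) := by
    refine IsAddTorsionFree.of_not_isOfFinAddOrder ?_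
    intro g hg hfin
    obtain ⟨m, hm, hgm⟩ := isOfFinAddOrder_iff_nsmul_eq_zero.mp hfin
    exact hg (htf g.toMul m hm hgm)
  haveI : NoZeroSMulDivisors ℤ (Additive H) := IsAddTorsionFree.to_noZeroSMulDivisors_int
  haveI : Module.Free ℤ (Additive H) := Module.free_of_finite_type_torsion_free'
  -- choose a basis, giving `Additive H ≃+ (Fin n → ℤ)`
  let b := Module.Free.chooseBasis ℤ (Additive H)
  haveI : Fintype (Module.Free.ChooseBasisIndex ℤ (Additive H)) :=
    Module.Free.ChooseBasisIndex.fintype ℤ (Additive H)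
  set n := Fintype.card (Module.Free.ChooseBasisIndex ℤ (Additive H))
  let e₁ : Additive H ≃ₗ[ℤ] (Module.Free.ChooseBasisIndex ℤ (Additive H) → ℤ) :=
    b.equivFun
  let e₂ : (Module.Free.ChooseBasisIndex ℤ (Additive H) → ℤ) ≃ₗ[ℤ] (Fin n → ℤ) :=
    LinearEquiv.funCongrLeft ℤ ℤ (Fintype.equivFin _).symm
  have e : H ≃* Multiplicative (Fin n → ℤ) :=
    (MulEquiv.multiplicativeAdditive H).symm.trans
      (AddEquiv.toMultiplicative (e₁.trans e₂).toAddEquiv)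
  exact memFrakC_of_mulEquiv e.symm (memFrakC_int_pow n)

/-- Every countable torsion-free abelian group belongs to the class `𝔉`. -/
theorem memFrakC_of_countable_torsionFree_abelian
    (G : Type) [CommGroup G] [Countable G]
    (htf : ∀ (g : G) (m : ℕ), 1 ≤ m → g ^ m = 1 → g = 1) :
    MemFrakC G := by
  intro C hC
  -- `G` is the directed union of its finitely generated subgroups
  refine hC.union G (Finset G) (fun S => Subgroup.closure (S : Set G)) ?_ ?_ ?_
  · intro S T
    haveI := Classical.decEq G
    exact ⟨S ∪ T,
      Subgroup.closure_mono (by intro x hx; simp only [Finset.coe_union, Set.mem_union]; exact Or.inl hx),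
      Subgroup.closure_mono (by intro x hx; simp only [Finset.coe_union, Set.mem_union]; exact Or.inr hx)⟩
  · intro S
    refine memFrakC_of_fg_torsionFree _ ?_ C hC
    intro g m hm hgm
    have : (g : G) ^ m = 1 := by
      have := congrArg (Subtype.val) hgm
      simpa using this
    exact Subtype.ext (htf g m hm this)
  · intro g
    exact ⟨{g}, Subgroup.subset_closure (by simp)⟩
end

section
/- For every k ≥ 1 there exists a continuous path u: [0,1] → M_k(ℂ) ⊗ M_k(ℂ) such that u_t is unitary for every t, u_0 = 1, u_1 = ∑_{i,j=1}^{k} e_{i,j} ⊗ e_{j,i} (the flip unitary), and u_t commutes with z ⊗ z for every z ∈ M_k(ℂ) and every t ∈ [0,1]. -/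
open scoped Kronecker

noncomputable def flipM (k : ℕ) : Matrix (Fin k × Fin k) (Fin k × Fin k) ℂ :=
  fun p q => if p.1 = q.2 ∧ p.2 = q.1 then 1 else 0

lemma flipM_eq_sum (k : ℕ) : flipM k = ∑ i : Fin k, ∑ j : Fin k,
    Matrix.single i j (1 : ℂ) ⊗ₖ Matrix.single j i (1 : ℂ) := by
  ext ⟨a, b⟩ ⟨c, d⟩
  simp only [flipM, Matrix.sum_apply, Matrix.kroneckerMap_apply, Matrix.single,
    Matrix.of_apply]
  rw [Finset.sum_eq_single a]
  · rw [Finset.sum_eq_single b] <;> aesop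
  · intro p _ hp
    apply Finset.sum_eq_zero
    aesop
  · simp

lemma flipM_mul_self (k : ℕ) : flipM k * flipM k = 1 := by
  ext ⟨a, b⟩ ⟨c, d⟩
  simp only [Matrix.mul_apply, flipM, Fintype.sum_prod_type]
  rw [Finset.sum_eq_single b]
  · rw [Finset.sum_eq_single a]
    · simp [Matrix.one_apply, Prod.ext_iff]
      aesop
    · aesop
    · simp
  · intro p _ hp
    apply Finset.sum_eq_zero
    aesop
  · simp

lemma flipM_conjTranspose (k : ℕ) : (flipM k).conjTranspose = flipM k := by
  ext p q
  simp only [Matrix.conjTranspose_apply, flipM]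
  aesop

lemma flipM_comm (k : ℕ) (z : Matrix (Fin k) (Fin k) ℂ) :
    flipM k * (z ⊗ₖ z) = (z ⊗ₖ z) * flipM k := by
  ext ⟨a, b⟩ ⟨c, d⟩
  simp only [Matrix.mul_apply, flipM, Fintype.sum_prod_type, Matrix.kroneckerMap_apply]
  rw [Finset.sum_eq_single b]
  · rw [Finset.sum_eq_single a]
    · simp only [if_pos (And.intro rfl rfl), one_mul]
      rw [Finset.sum_eq_single d]
      · rw [Finset.sum_eq_single c] <;> aesop (add simp mul_comm)
      · intro p _ hp
        apply Finset.sum_eq_zero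
        aesop
      · simp
    · aesop
    · simp
  · intro p _ hp
    apply Finset.sum_eq_zero
    aesop
  · simp

lemma combo_unitary {n : Type*} [Fintype n] [DecidableEq n]
    (F : Matrix n n ℂ) (hF2 : F * F = 1) (hFH : F.conjTranspose = F) (a b : ℂ)
    (h1 : a * (starRingEnd ℂ) a + b * (starRingEnd ℂ) b = 1)
    (h2 : a * (starRingEnd ℂ) b + b * (starRingEnd ℂ) a = 0) :
    (a • (1 : Matrix n n ℂ) + b • F) ∈ Matrix.unitaryGroup n ℂ := by
  rw [Matrix.mem_unitaryGroup_iff]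
  have hstar : star (a • (1 : Matrix n n ℂ) + b • F)
      = (starRingEnd ℂ) a • 1 + (starRingEnd ℂ) b • F := by
    simp [Matrix.star_eq_conjTranspose, Matrix.conjTranspose_smul, hFH]
  rw [hstar, mul_add, add_mul, add_mul, Matrix.smul_mul, Matrix.smul_mul, Matrix.smul_mul,
    Matrix.smul_mul, Matrix.mul_smul, Matrix.mul_smul, Matrix.mul_smul, Matrix.mul_smul,
    one_mul, mul_one, one_mul, hF2, smul_smul, smul_smul, smul_smul, smul_smul]
  calc (a * (starRingEnd ℂ) a) • (1 : Matrix n n ℂ) + (b * (starRingEnd ℂ) a) • F +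
        ((a * (starRingEnd ℂ) b) • F + (b * (starRingEnd ℂ) b) • 1)
      = (a * (starRingEnd ℂ) a + b * (starRingEnd ℂ) b) • (1 : Matrix n n ℂ) +
        (a * (starRingEnd ℂ) b + b * (starRingEnd ℂ) a) • F := by
        rw [add_smul, add_smul]; abel
    _ = 1 := by rw [h1, h2, one_smul, zero_smul, add_zero]

/-- For each `k ≥ 1` there is a norm-continuous path `u : [0,1] → M_k(ℂ) ⊗ M_k(ℂ)` of
unitaries with `u_0 = 1`, `u_1 = ∑_{i,j} e_{i,j} ⊗ e_{j,i}` (the flip unitary), such that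
every `u_t` commutes with `z ⊗ z` for all `z ∈ M_k(ℂ)`. -/
theorem exists_unitary_path_to_flip_commuting_with_symmetric (k : ℕ) (hk : 1 ≤ k) :
    ∃ u : ℝ → Matrix (Fin k × Fin k) (Fin k × Fin k) ℂ,
      ContinuousOn u (Set.Icc 0 1) ∧
      (∀ t ∈ Set.Icc (0 : ℝ) 1, u t ∈ Matrix.unitaryGroup (Fin k × Fin k) ℂ) ∧
      u 0 = 1 ∧
      (u 1 = ∑ i : Fin k, ∑ j : Fin k,
        Matrix.single i j (1 : ℂ) ⊗ₖ Matrix.single j i (1 : ℂ)) ∧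
      (∀ z : Matrix (Fin k) (Fin k) ℂ, ∀ t ∈ Set.Icc (0 : ℝ) 1,
        u t * (z ⊗ₖ z) = (z ⊗ₖ z) * u t) := by
  refine ⟨fun t => ((1 + Complex.exp (Real.pi * t * Complex.I)) / 2) • 1 +
      ((1 - Complex.exp (Real.pi * t * Complex.I)) / 2) • flipM k, ?_, ?_, ?_, ?_, ?_⟩
  · apply Continuous.continuousOn
    apply Continuous.add <;> apply Continuous.fun_smul _ continuous_const <;> fun_prop
  · intro t ht
    have hconj : (starRingEnd ℂ) (Complex.exp (Real.pi * t * Complex.I))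
        = Complex.exp (-(Real.pi * t * Complex.I)) := by
      rw [← Complex.exp_conj]
      congr 1
      simp [Complex.conj_I]
    have hee : Complex.exp (Real.pi * t * Complex.I) *
        (starRingEnd ℂ) (Complex.exp (Real.pi * t * Complex.I)) = 1 := by
      rw [hconj, ← Complex.exp_add]
      simp
    apply combo_unitary _ (flipM_mul_self k) (flipM_conjTranspose k)
    · simp only [map_div₀, map_add, map_sub, map_one, map_ofNat]
      linear_combination hee / 2
    · simp only [map_div₀, map_add, map_sub, map_one, map_ofNat]
      linear_combination -hee / 2
  · simp
  · rw [← flipM_eq_sum]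
    norm_num [Complex.exp_pi_mul_I]
  · intro z t ht
    rw [add_mul, mul_add, Matrix.smul_mul, Matrix.smul_mul, Matrix.mul_smul, Matrix.mul_smul,
      one_mul, mul_one, flipM_comm]
end

section
/- Fix k ≥ 2 and let u: [0,1] → M_k(ℂ) ⊗ M_k(ℂ) be any continuous path of unitaries with u_0 = 1 and u_1 = ∑_{i,j=1}^{k} e_{i,j} ⊗ e_{j,i}. Define w(t) = u_t + cos(πt/2)·(1 ⊗ e_{k+1,k+1}) ∈ M_k ⊗ M_{k+1} (regarding u_t ∈ M_k ⊗ M_k ⊂ M_k ⊗ M_{k+1} via the corner embedding), ψ(x)(t) = w(t)(x ⊗ 1)w(t)* for x ∈ M_k, v = ∑_{j=1}^{k} e_{1,j} ⊗ e_{j,k+1}, and s(t) = sin(πt/2)·w(t)v. Then: (i) for every x ∈ M_k, the function ψ(x) belongs to Z_{k,k+1}; (ii) the function s belongs to Z_{k,k+1} and is a contraction; (iii) s*s = 1 − ψ(1); (iv) ψ(e_{1,1})·s = s. -/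
open scoped Kronecker Matrix.Norms.L2Operator ComplexOrder

/-- Membership in the dimension drop algebra
`Z_{p,q} = {f ∈ C([0,1], M_p ⊗ M_q) : f(0) ∈ M_p ⊗ 1, f(1) ∈ 1 ⊗ M_q}`,
where `M_p ⊗ M_q` is realized as matrices indexed by `Fin p × Fin q` via the Kronecker
product. -/
def MemDimDrop (p q : ℕ) (f : ℝ → Matrix (Fin p × Fin q) (Fin p × Fin q) ℂ) : Prop :=
  ContinuousOn f (Set.Icc 0 1) ∧
  (∃ A : Matrix (Fin p) (Fin p) ℂ, f 0 = A ⊗ₖ (1 : Matrix (Fin q) (Fin q) ℂ)) ∧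
  (∃ B : Matrix (Fin q) (Fin q) ℂ, f 1 = (1 : Matrix (Fin p) (Fin p) ℂ) ⊗ₖ B)

/-- The corner embedding `M_k ⊗ M_k ⊂ M_k ⊗ M_{k+1}`, given by the identity on the first
tensor factor and the upper-left corner embedding `M_k ⊂ M_{k+1}` on the second. -/
def cornerEmbed (k : ℕ) (A : Matrix (Fin k × Fin k) (Fin k × Fin k) ℂ) :
    Matrix (Fin k × Fin (k + 1)) (Fin k × Fin (k + 1)) ℂ :=
  Matrix.of fun x y =>
    if h : (x.2 : ℕ) < k ∧ (y.2 : ℕ) < k then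
      A (x.1, ⟨x.2, h.1⟩) (y.1, ⟨y.2, h.2⟩)
    else 0

/-- The path `w(t) = u_t + cos(πt/2)·(1 ⊗ e_{k+1,k+1}) ∈ M_k ⊗ M_{k+1}`, where
`u_t ∈ M_k ⊗ M_k` is regarded as an element of `M_k ⊗ M_{k+1}` via the corner embedding. -/
noncomputable def wPath (k : ℕ) (u : ℝ → Matrix (Fin k × Fin k) (Fin k × Fin k) ℂ)
    (t : ℝ) : Matrix (Fin k × Fin (k + 1)) (Fin k × Fin (k + 1)) ℂ :=
  cornerEmbed k (u t) +
    (Real.cos (Real.pi * t / 2) : ℂ) •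
      ((1 : Matrix (Fin k) (Fin k) ℂ) ⊗ₖ
        Matrix.single (Fin.last k) (Fin.last k) (1 : ℂ))

/-- The map `ψ(x)(t) = w(t) (x ⊗ 1) w(t)*` for `x ∈ M_k`. -/
noncomputable def psiMap (k : ℕ) (u : ℝ → Matrix (Fin k × Fin k) (Fin k × Fin k) ℂ)
    (x : Matrix (Fin k) (Fin k) ℂ) (t : ℝ) :
    Matrix (Fin k × Fin (k + 1)) (Fin k × Fin (k + 1)) ℂ :=
  wPath k u t * (x ⊗ₖ (1 : Matrix (Fin (k + 1)) (Fin (k + 1)) ℂ)) * star (wPath k u t)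

/-- The element `v = ∑_{j=1}^{k} e_{1,j} ⊗ e_{j,k+1} ∈ M_k ⊗ M_{k+1}` (`0`-indexed:
`v = ∑_j e_{0,j} ⊗ e_{j,k}`). -/
noncomputable def vElem (k : ℕ) (hk : 0 < k) :
    Matrix (Fin k × Fin (k + 1)) (Fin k × Fin (k + 1)) ℂ :=
  ∑ j : Fin k,
    Matrix.single (⟨0, hk⟩ : Fin k) j (1 : ℂ) ⊗ₖ
      Matrix.single j.castSucc (Fin.last k) (1 : ℂ)

/-- The function `s(t) = sin(πt/2)·w(t)·v`. -/
noncomputable def sElem (k : ℕ) (hk : 0 < k)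
    (u : ℝ → Matrix (Fin k × Fin k) (Fin k × Fin k) ℂ) (t : ℝ) :
    Matrix (Fin k × Fin (k + 1)) (Fin k × Fin (k + 1)) ℂ :=
  (Real.sin (Real.pi * t / 2) : ℂ) • (wPath k u t * vElem k hk)


/-! ### Auxiliary definitions and lemmas -/

/-- `E = 1 ⊗ e_{k+1,k+1}`, the complement of the corner. -/
noncomputable def EE (k : ℕ) : Matrix (Fin k × Fin (k + 1)) (Fin k × Fin (k + 1)) ℂ :=
  (1 : Matrix (Fin k) (Fin k) ℂ) ⊗ₖ Matrix.single (Fin.last k) (Fin.last k) (1 : ℂ)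

/-- The flip unitary. -/
noncomputable def Sflip (k : ℕ) : Matrix (Fin k × Fin k) (Fin k × Fin k) ℂ :=
  ∑ i : Fin k, ∑ j : Fin k,
    Matrix.single i j (1 : ℂ) ⊗ₖ Matrix.single j i (1 : ℂ)

/-- Extension of a `k × k` matrix to a `(k+1) × (k+1)` matrix by zeros. -/
def extendM (k : ℕ) (x : Matrix (Fin k) (Fin k) ℂ) : Matrix (Fin (k+1)) (Fin (k+1)) ℂ :=
  Matrix.of fun a b => if h : (a : ℕ) < k ∧ (b : ℕ) < k then x ⟨a, h.1⟩ ⟨b, h.2⟩ else 0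

namespace DimDropAux

variable {k : ℕ}

lemma wPath_def (u : ℝ → Matrix (Fin k × Fin k) (Fin k × Fin k) ℂ) (t : ℝ) :
    wPath k u t = cornerEmbed k (u t) + ((Real.cos (Real.pi * t / 2) : ℝ) : ℂ) • EE k := rfl

lemma corner_apply_castSucc (A : Matrix (Fin k × Fin k) (Fin k × Fin k) ℂ)
    (p r : Fin k) (q s : Fin k) :
    cornerEmbed k A (p, q.castSucc) (r, s.castSucc) = A (p, q) (r, s) := by
  simp only [cornerEmbed, Matrix.of_apply, Fin.coe_castSucc]
  rw [dif_pos ⟨q.isLt, s.isLt⟩]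

lemma corner_apply_last_left (A : Matrix (Fin k × Fin k) (Fin k × Fin k) ℂ)
    (p : Fin k) (y : Fin k × Fin (k+1)) :
    cornerEmbed k A (p, Fin.last k) y = 0 := by
  simp [cornerEmbed]

lemma corner_apply_last_right (A : Matrix (Fin k × Fin k) (Fin k × Fin k) ℂ)
    (x : Fin k × Fin (k+1)) (r : Fin k) :
    cornerEmbed k A x (r, Fin.last k) = 0 := by
  simp [cornerEmbed]
lemma corner_mul (A B : Matrix (Fin k × Fin k) (Fin k × Fin k) ℂ) :
    cornerEmbed k A * cornerEmbed k B = cornerEmbed k (A * B) := by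
  ext ⟨p, q⟩ ⟨r, s⟩
  induction q using Fin.lastCases with
  | last =>
    rw [Matrix.mul_apply, corner_apply_last_left]
    simp [corner_apply_last_left]
  | cast q =>
    induction s using Fin.lastCases with
    | last =>
      rw [Matrix.mul_apply, corner_apply_last_right]
      simp [corner_apply_last_right]
    | cast s =>
      rw [corner_apply_castSucc, Matrix.mul_apply, Matrix.mul_apply, Fintype.sum_prod_type,
        Fintype.sum_prod_type]
      congr 1 with a
      rw [Fin.sum_univ_castSucc]
      simp [corner_apply_castSucc, corner_apply_last_right, corner_apply_last_left]

lemma corner_star (A : Matrix (Fin k × Fin k) (Fin k × Fin k) ℂ) :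
    star (cornerEmbed k A) = cornerEmbed k (star A) := by
  ext ⟨p, q⟩ ⟨r, s⟩
  show (star (cornerEmbed k A)) (p,q) (r,s) = _
  rw [Matrix.star_apply]
  induction q using Fin.lastCases with
  | last => simp [corner_apply_last_left, corner_apply_last_right]
  | cast q =>
    induction s using Fin.lastCases with
    | last => simp [corner_apply_last_left, corner_apply_last_right]
    | cast s =>
      rw [corner_apply_castSucc, corner_apply_castSucc, Matrix.star_apply]

lemma EE_apply (p r : Fin k) (q s : Fin (k+1)) :
    EE k (p, q) (r, s) = if p = r ∧ q = Fin.last k ∧ s = Fin.last k then 1 else 0 := by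
  simp only [EE, Matrix.kroneckerMap_apply, Matrix.one_apply, Matrix.single,
    Matrix.of_apply, ite_and, eq_comm]
  split_ifs <;> simp_all

lemma corner_mul_EE (A : Matrix (Fin k × Fin k) (Fin k × Fin k) ℂ) :
    cornerEmbed k A * EE k = 0 := by
  ext ⟨p, q⟩ ⟨r, s⟩
  simp [Matrix.mul_apply, Fintype.sum_prod_type, EE_apply, mul_ite, ite_and,
    Finset.sum_ite_eq, Finset.sum_ite_eq', corner_apply_last_right]

lemma EE_mul_corner (A : Matrix (Fin k × Fin k) (Fin k × Fin k) ℂ) :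
    EE k * cornerEmbed k A = 0 := by
  ext ⟨p, q⟩ ⟨r, s⟩
  simp [Matrix.mul_apply, Fintype.sum_prod_type, EE_apply, ite_mul, ite_and,
    Finset.sum_ite_eq, Finset.sum_ite_eq', corner_apply_last_left]

lemma EE_mul_EE : EE k * EE k = EE k := by
  ext ⟨p, q⟩ ⟨r, s⟩
  simp [Matrix.mul_apply, Fintype.sum_prod_type, EE_apply, ite_mul, mul_ite, ite_and,
    Finset.sum_ite_eq, Finset.sum_ite_eq']
  split_ifs <;> simp_all

lemma star_EE : star (EE k) = EE k := by
  ext ⟨p, q⟩ ⟨r, s⟩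
  show (star (EE k)) (p,q) (r,s) = _
  rw [Matrix.star_apply, EE_apply, EE_apply]
  split_ifs <;> simp_all <;> tauto

lemma corner_one : cornerEmbed k (1 : Matrix (Fin k × Fin k) (Fin k × Fin k) ℂ) = 1 - EE k := by
  ext ⟨p, q⟩ ⟨r, s⟩
  rw [Matrix.sub_apply]
  induction q using Fin.lastCases with
  | last =>
    induction s using Fin.lastCases with
    | last => simp [corner_apply_last_left, EE_apply, Matrix.one_apply, Prod.ext_iff]
    | cast s =>
      simp only [corner_apply_last_left, EE_apply, Matrix.one_apply, Prod.ext_iff]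
      have := (Fin.castSucc_lt_last s).ne
      simp_all [eq_comm]
  | cast q =>
    induction s using Fin.lastCases with
    | last =>
      simp [corner_apply_last_right, EE_apply, Matrix.one_apply, Prod.ext_iff,
        (Fin.castSucc_lt_last q).ne]
    | cast s =>
      rw [corner_apply_castSucc]
      simp [EE_apply, Matrix.one_apply, Prod.ext_iff, (Fin.castSucc_lt_last q).ne,
        Fin.castSucc_inj]

lemma kron_apply1 (x : Matrix (Fin k) (Fin k) ℂ) (p r : Fin k) (q s : Fin (k+1)) :
    (x ⊗ₖ (1 : Matrix (Fin (k+1)) (Fin (k+1)) ℂ)) (p, q) (r, s)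
      = if q = s then x p r else 0 := by
  simp [Matrix.kroneckerMap_apply, Matrix.one_apply, mul_ite]

lemma kron_apply0 (x : Matrix (Fin k) (Fin k) ℂ) (p r : Fin k) (q s : Fin k) :
    (x ⊗ₖ (1 : Matrix (Fin k) (Fin k) ℂ)) (p, q) (r, s)
      = if q = s then x p r else 0 := by
  simp [Matrix.kroneckerMap_apply, Matrix.one_apply, mul_ite]

lemma corner_mul_kron (A : Matrix (Fin k × Fin k) (Fin k × Fin k) ℂ)
    (x : Matrix (Fin k) (Fin k) ℂ) :
    cornerEmbed k A * (x ⊗ₖ (1 : Matrix (Fin (k+1)) (Fin (k+1)) ℂ))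
      = cornerEmbed k (A * (x ⊗ₖ (1 : Matrix (Fin k) (Fin k) ℂ))) := by
  ext ⟨p, q⟩ ⟨r, s⟩
  induction s using Fin.lastCases with
  | last =>
    rw [corner_apply_last_right]
    simp [Matrix.mul_apply, Fintype.sum_prod_type, Matrix.one_apply, mul_ite,
      Finset.sum_ite_eq, Finset.sum_ite_eq', corner_apply_last_right]
  | cast s =>
    induction q using Fin.lastCases with
    | last =>
      rw [corner_apply_last_left]
      simp [Matrix.mul_apply, Fintype.sum_prod_type, Matrix.one_apply, mul_ite,
        Finset.sum_ite_eq, Finset.sum_ite_eq', corner_apply_last_left]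
    | cast q =>
      rw [corner_apply_castSucc, Matrix.mul_apply, Matrix.mul_apply, Fintype.sum_prod_type,
        Fintype.sum_prod_type]
      congr 1 with a
      rw [Fin.sum_univ_castSucc]
      simp [Matrix.one_apply, mul_ite, Finset.sum_ite_eq, Finset.sum_ite_eq',
        corner_apply_castSucc, corner_apply_last_right, corner_apply_last_left,
        Fin.castSucc_inj, (Fin.castSucc_lt_last s).ne']

lemma kron_mul_corner (A : Matrix (Fin k × Fin k) (Fin k × Fin k) ℂ)
    (x : Matrix (Fin k) (Fin k) ℂ) :
    (x ⊗ₖ (1 : Matrix (Fin (k+1)) (Fin (k+1)) ℂ)) * cornerEmbed k A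
      = cornerEmbed k ((x ⊗ₖ (1 : Matrix (Fin k) (Fin k) ℂ)) * A) := by
  ext ⟨p, q⟩ ⟨r, s⟩
  induction q using Fin.lastCases with
  | last =>
    rw [corner_apply_last_left]
    simp [Matrix.mul_apply, Fintype.sum_prod_type, Matrix.one_apply, ite_mul, mul_ite,
      Finset.sum_ite_eq, Finset.sum_ite_eq', corner_apply_last_left]
  | cast q =>
    induction s using Fin.lastCases with
    | last =>
      rw [corner_apply_last_right]
      simp [Matrix.mul_apply, Fintype.sum_prod_type, Matrix.one_apply, ite_mul, mul_ite,
        Finset.sum_ite_eq, Finset.sum_ite_eq', corner_apply_last_right]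
    | cast s =>
      rw [corner_apply_castSucc, Matrix.mul_apply, Matrix.mul_apply, Fintype.sum_prod_type,
        Fintype.sum_prod_type]
      congr 1 with a
      rw [Fin.sum_univ_castSucc]
      simp [Matrix.one_apply, ite_mul, mul_ite, Finset.sum_ite_eq, Finset.sum_ite_eq',
        corner_apply_castSucc, corner_apply_last_right, corner_apply_last_left,
        Fin.castSucc_inj, (Fin.castSucc_lt_last q).ne']


lemma v_apply (hk : 0 < k) (p r : Fin k) (q s : Fin (k+1)) :
    vElem k hk (p, q) (r, s)
      = if p = ⟨0, hk⟩ ∧ q = r.castSucc ∧ s = Fin.last k then 1 else 0 := by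
  simp only [vElem, Matrix.sum_apply, Matrix.kroneckerMap_apply, Matrix.single,
    Matrix.of_apply, ite_and, mul_ite, mul_one, mul_zero]
  rw [Finset.sum_eq_single r]
  · split_ifs <;> simp_all [eq_comm]
  · intro b _ hb
    split_ifs <;> simp_all [eq_comm]
  · simp

lemma EE_mul_v (hk : 0 < k) : EE k * vElem k hk = 0 := by
  ext ⟨p, q⟩ ⟨r, s⟩
  simp [Matrix.mul_apply, Fintype.sum_prod_type, EE_apply, v_apply, ite_mul, mul_ite, ite_and,
    Finset.sum_ite_eq, Finset.sum_ite_eq', (Fin.castSucc_lt_last r).ne]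

lemma starV_mul_v (hk : 0 < k) : star (vElem k hk) * vElem k hk = EE k := by
  ext ⟨p, q⟩ ⟨r, s⟩
  simp only [Matrix.mul_apply, Matrix.star_apply, Fintype.sum_prod_type, v_apply, EE_apply]
  rw [Finset.sum_eq_single (⟨0, hk⟩ : Fin k)]
  · rw [Fin.sum_univ_castSucc]
    simp only [Fin.castSucc_inj, ite_and, eq_self_iff_true, if_true]
    rw [Finset.sum_eq_single p]
    · split_ifs <;> simp_all [eq_comm, (Fin.castSucc_lt_last p).ne, (Fin.castSucc_lt_last r).ne]
    · intro b _ hb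
      split_ifs <;> simp_all [Fin.castSucc_inj, eq_comm]
    · simp
  · intro b _ hb
    apply Finset.sum_eq_zero
    intro c _
    split_ifs <;> simp_all [eq_comm]
  · simp

lemma e00_mul_v (hk : 0 < k) :
    (Matrix.single (⟨0, hk⟩ : Fin k) (⟨0, hk⟩ : Fin k) (1 : ℂ)
        ⊗ₖ (1 : Matrix (Fin (k+1)) (Fin (k+1)) ℂ)) * vElem k hk = vElem k hk := by
  ext ⟨p, q⟩ ⟨r, s⟩
  simp only [Matrix.mul_apply, Fintype.sum_prod_type, Matrix.kroneckerMap_apply,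
    Matrix.single, Matrix.one_apply, Matrix.of_apply, v_apply, ite_and,
    ite_mul, mul_ite, one_mul, zero_mul, mul_one, mul_zero]
  rw [Finset.sum_eq_single (⟨0, hk⟩ : Fin k)]
  · rw [Finset.sum_eq_single q]
    · split_ifs <;> simp_all [eq_comm]
    · intro b _ hb; split_ifs <;> simp_all [eq_comm]
    · simp
  · intro b _ hb
    apply Finset.sum_eq_zero
    intro c _
    split_ifs <;> simp_all [eq_comm]
  · simp


lemma S_apply (p q r s : Fin k) :
    Sflip k (p, q) (r, s) = if p = s ∧ q = r then 1 else 0 := by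
  simp only [Sflip, Matrix.sum_apply, Matrix.kroneckerMap_apply, Matrix.single,
    Matrix.of_apply, ite_and, ite_mul, mul_ite, one_mul, zero_mul, mul_one, mul_zero]
  rw [Finset.sum_eq_single p]
  · rw [Finset.sum_eq_single q]
    · split_ifs <;> simp_all [eq_comm]
    · intro b _ hb; split_ifs <;> simp_all [eq_comm]
    · simp
  · intro b _ hb
    apply Finset.sum_eq_zero
    intro c _
    split_ifs <;> simp_all [eq_comm]
  · simp

lemma flip_comm (x : Matrix (Fin k) (Fin k) ℂ) :
    Sflip k * (x ⊗ₖ (1 : Matrix (Fin k) (Fin k) ℂ))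
      = ((1 : Matrix (Fin k) (Fin k) ℂ) ⊗ₖ x) * Sflip k := by
  ext ⟨p, q⟩ ⟨r, s⟩
  simp only [Matrix.mul_apply, Fintype.sum_prod_type, S_apply, Matrix.kroneckerMap_apply,
    Matrix.one_apply, ite_and, ite_mul, mul_ite, one_mul, zero_mul, mul_one, mul_zero,
    Finset.sum_ite_eq, Finset.sum_ite_eq', Finset.mem_univ, if_true]
  split_ifs <;> simp_all [eq_comm]

lemma corner_S_mul_v (hk : 0 < k) :
    cornerEmbed k (Sflip k) * vElem k hk
      = (1 : Matrix (Fin k) (Fin k) ℂ)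
          ⊗ₖ Matrix.single (⟨0, Nat.succ_pos k⟩ : Fin (k+1)) (Fin.last k) (1 : ℂ) := by
  ext ⟨p, q⟩ ⟨r, s⟩
  have hrhs : ((1 : Matrix (Fin k) (Fin k) ℂ)
      ⊗ₖ Matrix.single (⟨0, Nat.succ_pos k⟩ : Fin (k+1)) (Fin.last k) (1 : ℂ)) (p, q) (r, s)
      = if p = r ∧ q = ⟨0, Nat.succ_pos k⟩ ∧ s = Fin.last k then 1 else 0 := by
    simp only [Matrix.kroneckerMap_apply, Matrix.one_apply, Matrix.single,
      Matrix.of_apply, ite_and, mul_ite, mul_one, mul_zero]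
    split_ifs <;> simp_all [eq_comm]
  rw [hrhs, Matrix.mul_apply, Fintype.sum_prod_type]
  rw [Finset.sum_eq_single (⟨0, hk⟩ : Fin k)]
  · rw [Fin.sum_univ_castSucc]
    rw [Finset.sum_eq_single r]
    · induction q using Fin.lastCases with
      | last =>
        simp only [corner_apply_last_left, zero_mul, zero_add, add_zero]
        split_ifs with h
        · exact absurd h.2.1 (by simp [Fin.ext_iff]; omega)
        · rfl
      | cast q =>
        rw [corner_apply_castSucc, corner_apply_last_right, S_apply, v_apply, v_apply]
        simp only [zero_mul, add_zero, ite_and, Fin.castSucc_inj, ite_mul, mul_ite,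
          one_mul, zero_mul, mul_one, mul_zero]
        have h0 : (q.castSucc = (⟨0, Nat.succ_pos k⟩ : Fin (k+1))) ↔ q = ⟨0, hk⟩ := by
          simp [Fin.ext_iff]
        split_ifs <;> simp_all [Fin.ext_iff] <;> omega
    · intro b _ hb
      induction q using Fin.lastCases with
      | last => simp [corner_apply_last_left]
      | cast q =>
        rw [corner_apply_castSucc, S_apply, v_apply]
        split_ifs <;> simp_all [eq_comm, Fin.ext_iff]
    · simp
  · intro b _ hb
    apply Finset.sum_eq_zero
    intro c _
    rw [v_apply]
    split_ifs <;> simp_all [eq_comm]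
  · simp

lemma corner_one_kron (x : Matrix (Fin k) (Fin k) ℂ) :
    cornerEmbed k ((1 : Matrix (Fin k) (Fin k) ℂ) ⊗ₖ x)
      = (1 : Matrix (Fin k) (Fin k) ℂ) ⊗ₖ extendM k x := by
  ext ⟨p, q⟩ ⟨r, s⟩
  simp only [cornerEmbed, extendM, Matrix.of_apply, Matrix.kroneckerMap_apply,
    Matrix.one_apply]
  split_ifs <;> simp_all

end DimDropAux

open DimDropAux in
/-- Given `k ≥ 2` and a continuous path `u` of unitaries in `M_k ⊗ M_k` from `1` to the
flip unitary, the functions `ψ(x)(t) = w(t)(x ⊗ 1)w(t)*` belong to the dimension drop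
algebra `Z_{k,k+1}`, the function `s(t) = sin(πt/2) w(t) v` is a contraction in
`Z_{k,k+1}`, and they satisfy `s*s = 1 - ψ(1)` and `ψ(e_{1,1}) s = s`. -/
theorem rordamWinter_generators_of_dimension_drop (k : ℕ) (hk : 2 ≤ k)
    (u : ℝ → Matrix (Fin k × Fin k) (Fin k × Fin k) ℂ)
    (hu_cont : ContinuousOn u (Set.Icc 0 1))
    (hu_unitary : ∀ t ∈ Set.Icc (0 : ℝ) 1, u t ∈ Matrix.unitaryGroup (Fin k × Fin k) ℂ)
    (hu0 : u 0 = 1)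
    (hu1 : u 1 = ∑ i : Fin k, ∑ j : Fin k,
      Matrix.single i j (1 : ℂ) ⊗ₖ Matrix.single j i (1 : ℂ)) :
    -- (i) each ψ(x) belongs to Z_{k,k+1}
    (∀ x : Matrix (Fin k) (Fin k) ℂ, MemDimDrop k (k + 1) (psiMap k u x)) ∧
    -- (ii) s belongs to Z_{k,k+1} and is a contraction
    MemDimDrop k (k + 1) (sElem k (by omega) u) ∧
    (∀ t ∈ Set.Icc (0 : ℝ) 1, ‖sElem k (by omega) u t‖ ≤ 1) ∧
    -- (iii) s*s = 1 - ψ(1)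
    (∀ t ∈ Set.Icc (0 : ℝ) 1,
      star (sElem k (by omega) u t) * sElem k (by omega) u t = 1 - psiMap k u 1 t) ∧
    -- (iv) ψ(e_{1,1})·s = s
    (∀ t ∈ Set.Icc (0 : ℝ) 1,
      psiMap k u (Matrix.single (⟨0, by omega⟩ : Fin k) (⟨0, by omega⟩ : Fin k)
          (1 : ℂ)) t * sElem k (by omega) u t = sElem k (by omega) u t) := by
  have hk0 : 0 < k := by omega
  have hS : u 1 = Sflip k := hu1
  -- continuity facts
  have hcorner_cont : Continuous (cornerEmbed k) := by
    apply continuous_matrix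
    intro i j
    simp only [cornerEmbed, Matrix.of_apply]
    split_ifs with h
    · exact continuous_id.matrix_elem _ _
    · exact continuous_const
  have hcos : Continuous fun t : ℝ => ((Real.cos (Real.pi * t / 2) : ℝ) : ℂ) :=
    Complex.continuous_ofReal.comp
      (Real.continuous_cos.comp ((continuous_const.mul continuous_id).div_const 2))
  have hsin : Continuous fun t : ℝ => ((Real.sin (Real.pi * t / 2) : ℝ) : ℂ) :=
    Complex.continuous_ofReal.comp
      (Real.continuous_sin.comp ((continuous_const.mul continuous_id).div_const 2))
  have hw_cont : ContinuousOn (wPath k u) (Set.Icc 0 1) := by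
    show ContinuousOn
      (fun t => cornerEmbed k (u t) + ((Real.cos (Real.pi * t / 2) : ℝ) : ℂ) • EE k) _
    exact (hcorner_cont.comp_continuousOn hu_cont).add
      ((hcos.smul continuous_const).continuousOn)
  -- the star of w
  have hstarw : ∀ t : ℝ, star (wPath k u t)
      = cornerEmbed k (star (u t)) + ((Real.cos (Real.pi * t / 2) : ℝ) : ℂ) • EE k := by
    intro t
    rw [wPath_def, star_add, star_smul, star_EE, corner_star, Complex.star_def,
      Complex.conj_ofReal]
  -- trig identity
  have hc2 : ∀ t : ℝ, ((Real.cos (Real.pi * t / 2) : ℝ) : ℂ) * ((Real.cos (Real.pi * t / 2) : ℝ) : ℂ)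
      = 1 - ((Real.sin (Real.pi * t / 2) : ℝ) : ℂ) ^ 2 := by
    intro t
    have h := Real.sin_sq_add_cos_sq (Real.pi * t / 2)
    have : Real.cos (Real.pi * t / 2) * Real.cos (Real.pi * t / 2)
        = 1 - Real.sin (Real.pi * t / 2) ^ 2 := by nlinarith
    rw [← Complex.ofReal_mul, this]
    push_cast
    ring
  -- w w* and w* w
  have hexp : ∀ (a b : Matrix (Fin k × Fin k) (Fin k × Fin k) ℂ) (c : ℂ),
      (cornerEmbed k a + c • EE k) * (cornerEmbed k b + c • EE k)
      = cornerEmbed k a * cornerEmbed k b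
        + c • (cornerEmbed k a * EE k)
        + c • (EE k * cornerEmbed k b)
        + (c * c) • (EE k * EE k) := by
    intro a b c
    simp only [mul_add, add_mul, mul_smul_comm, smul_mul_assoc, smul_smul, smul_add]
    abel
  have hww : ∀ t ∈ Set.Icc (0 : ℝ) 1, wPath k u t * star (wPath k u t)
      = 1 - ((Real.sin (Real.pi * t / 2) : ℝ) : ℂ) ^ 2 • EE k := by
    intro t ht
    have h1 : u t * star (u t) = 1 := Matrix.mem_unitaryGroup_iff.mp (hu_unitary t ht)
    rw [hstarw, wPath_def, hexp, corner_mul, h1, corner_one, corner_mul_EE, EE_mul_corner,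
      EE_mul_EE, smul_zero, add_zero, add_zero, hc2, sub_smul, one_smul]
    abel
  have hww' : ∀ t ∈ Set.Icc (0 : ℝ) 1, star (wPath k u t) * wPath k u t
      = 1 - ((Real.sin (Real.pi * t / 2) : ℝ) : ℂ) ^ 2 • EE k := by
    intro t ht
    have h1 : star (u t) * u t = 1 := Matrix.mem_unitaryGroup_iff'.mp (hu_unitary t ht)
    rw [hstarw, wPath_def, hexp, corner_mul, h1, corner_one, corner_mul_EE, EE_mul_corner,
      EE_mul_EE, smul_zero, add_zero, add_zero, hc2, sub_smul, one_smul]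
    abel
  -- w* (w v) = v
  have hwv : ∀ t ∈ Set.Icc (0 : ℝ) 1,
      star (wPath k u t) * (wPath k u t * vElem k hk0) = vElem k hk0 := by
    intro t ht
    rw [← mul_assoc, hww' t ht, sub_mul, one_mul, smul_mul_assoc, EE_mul_v, smul_zero,
      sub_zero]
  -- s* s = sin² E
  have hss : ∀ t ∈ Set.Icc (0 : ℝ) 1,
      star (sElem k hk0 u t) * sElem k hk0 u t
        = ((Real.sin (Real.pi * t / 2) : ℝ) : ℂ) ^ 2 • EE k := by
    intro t ht
    show star ((((Real.sin (Real.pi * t / 2) : ℝ)) : ℂ) • (wPath k u t * vElem k hk0)) *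
        ((((Real.sin (Real.pi * t / 2) : ℝ)) : ℂ) • (wPath k u t * vElem k hk0)) = _
    rw [star_smul, Complex.star_def, Complex.conj_ofReal, smul_mul_assoc, mul_smul_comm,
      smul_smul, star_mul, mul_assoc, hwv t ht, starV_mul_v, ← sq]
  -- values of w at the endpoints
  have hw0 : wPath k u 0 = 1 := by
    rw [wPath_def, hu0, corner_one, mul_zero, zero_div, Real.cos_zero, Complex.ofReal_one,
      one_smul, sub_add_cancel]
  have hw1 : wPath k u 1 = cornerEmbed k (Sflip k) := by
    rw [wPath_def, hS, mul_one, Real.cos_pi_div_two, Complex.ofReal_zero, zero_smul,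
      add_zero]
  have hSunit : Sflip k * star (Sflip k) = 1 := by
    rw [← hS]
    exact Matrix.mem_unitaryGroup_iff.mp (hu_unitary 1 ⟨zero_le_one, le_refl 1⟩)
  refine ⟨?_, ⟨?_, ?_, ?_⟩, ?_, ?_, ?_⟩
  · -- (i) ψ(x) ∈ Z
    intro x
    refine ⟨?_, ⟨x, ?_⟩, ⟨extendM k x, ?_⟩⟩
    · show ContinuousOn (fun t => wPath k u t *
        (x ⊗ₖ (1 : Matrix (Fin (k + 1)) (Fin (k + 1)) ℂ)) * star (wPath k u t)) _
      exact (hw_cont.mul continuousOn_const).mul hw_cont.star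
    · show wPath k u 0 * (x ⊗ₖ 1) * star (wPath k u 0) = _
      rw [hw0, star_one, one_mul, mul_one]
    · show wPath k u 1 * (x ⊗ₖ 1) * star (wPath k u 1) = _
      rw [hw1, corner_star, corner_mul_kron, corner_mul, flip_comm, mul_assoc, hSunit,
        mul_one, corner_one_kron]
  · -- (ii) continuity of s
    show ContinuousOn
      (fun t => (((Real.sin (Real.pi * t / 2) : ℝ)) : ℂ) • (wPath k u t * vElem k hk0)) _
    exact hsin.continuousOn.smul (hw_cont.mul continuousOn_const)
  · -- s 0 = 0 ⊗ 1
    refine ⟨0, ?_⟩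
    show (((Real.sin (Real.pi * 0 / 2) : ℝ)) : ℂ) • (wPath k u 0 * vElem k hk0) = _
    rw [mul_zero, zero_div, Real.sin_zero, Complex.ofReal_zero, zero_smul,
      Matrix.zero_kronecker]
  · -- s 1 = 1 ⊗ e_{1,k+1}
    refine ⟨Matrix.single (⟨0, Nat.succ_pos k⟩ : Fin (k+1)) (Fin.last k) (1 : ℂ), ?_⟩
    show (((Real.sin (Real.pi * 1 / 2) : ℝ)) : ℂ) • (wPath k u 1 * vElem k hk0) = _
    rw [mul_one, Real.sin_pi_div_two, Complex.ofReal_one, one_smul, hw1, corner_S_mul_v]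
  · -- contraction
    intro t ht
    have h1 : ‖sElem k hk0 u t‖ * ‖sElem k hk0 u t‖
        = ‖((Real.sin (Real.pi * t / 2) : ℝ) : ℂ) ^ 2 • EE k‖ := by
      rw [← hss t ht, CStarRing.norm_star_mul_self]
    rw [norm_smul, norm_pow, Complex.norm_real, Real.norm_eq_abs] at h1
    show ‖sElem k hk0 u t‖ ≤ 1
    have hE1 : ‖EE k‖ ≤ 1 := by
      have h2 : ‖EE k‖ * ‖EE k‖ = ‖EE k‖ := by
        conv_lhs => rw [← CStarRing.norm_star_mul_self (x := EE k)]
        rw [star_EE, EE_mul_EE]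
      nlinarith [norm_nonneg (EE k)]
    have hsin1 : |Real.sin (Real.pi * t / 2)| ≤ 1 := Real.abs_sin_le_one _
    have hn : (0 : ℝ) ≤ ‖sElem k hk0 u t‖ := norm_nonneg _
    nlinarith [norm_nonneg (EE k), abs_nonneg (Real.sin (Real.pi * t / 2)),
      sq_nonneg (‖sElem k hk0 u t‖ - 1), sq_nonneg (|Real.sin (Real.pi * t / 2)| - 1),
      mul_nonneg (abs_nonneg (Real.sin (Real.pi * t / 2))) (norm_nonneg (EE k))]
  · -- (iii)
    intro t ht
    have hpsi1 : psiMap k u 1 t = 1 - ((Real.sin (Real.pi * t / 2) : ℝ) : ℂ) ^ 2 • EE k := by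
      show wPath k u t * ((1 : Matrix (Fin k) (Fin k) ℂ) ⊗ₖ 1) * star (wPath k u t) = _
      rw [Matrix.one_kronecker_one, mul_one, hww t ht]
    rw [hpsi1, sub_sub_cancel]
    exact hss t ht
  · -- (iv)
    intro t ht
    show wPath k u t * (Matrix.single _ _ _ ⊗ₖ 1) * star (wPath k u t) *
        ((((Real.sin (Real.pi * t / 2) : ℝ)) : ℂ) • (wPath k u t * vElem k hk0))
      = (((Real.sin (Real.pi * t / 2) : ℝ)) : ℂ) • (wPath k u t * vElem k hk0)
    rw [mul_smul_comm]
    congr 1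
    rw [mul_assoc (wPath k u t * _) (star (wPath k u t)), hwv t ht, mul_assoc,
      e00_mul_v hk0]
end

section
/- Fix k ≥ 2 and let u: [0,1] → M_k(ℂ) ⊗ M_k(ℂ) be any continuous path of unitaries with u_0 = 1 and u_1 = ∑_{i,j=1}^{k} e_{i,j} ⊗ e_{j,i}. Define w(t) = u_t + cos(πt/2)·(1 ⊗ e_{k+1,k+1}) ∈ M_k ⊗ M_{k+1} and ψ(x)(t) = w(t)(x ⊗ 1)w(t)* for x ∈ M_k. Then the map x ↦ ψ(x) is linear and satisfies: (i) ‖ψ(x)‖ ≤ ‖x‖ for all x ∈ M_k; (ii) if x ∈ M_k is positive semidefinite then ψ(x)(t) is positive semidefinite for every t ∈ [0,1]; (iii) ψ has order zero: if x, y ∈ M_k satisfy xy = 0, then ψ(x)·ψ(y) = 0. -/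
open scoped Kronecker Matrix.Norms.L2Operator ComplexOrder

noncomputable abbrev eProj (k : ℕ) : Matrix (Fin k × Fin (k+1)) (Fin k × Fin (k+1)) ℂ :=
  (1 : Matrix (Fin k) (Fin k) ℂ) ⊗ₖ Matrix.single (Fin.last k) (Fin.last k) (1 : ℂ)

section Helpers

variable {k : ℕ}

lemma cornerEmbed_mul {k : ℕ} (A B : Matrix (Fin k × Fin k) (Fin k × Fin k) ℂ) :
    cornerEmbed k A * cornerEmbed k B = cornerEmbed k (A * B) := by
  ext ⟨i, j⟩ ⟨i', j'⟩
  simp only [Matrix.mul_apply, cornerEmbed, Matrix.of_apply, Fintype.sum_prod_type]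
  rw [Finset.sum_comm]
  by_cases hj : (j : ℕ) < k
  · by_cases hj' : (j' : ℕ) < k
    · rw [dif_pos ⟨hj, hj'⟩, Fin.sum_univ_castSucc]
      simp only [Fin.coe_castSucc, Fin.is_lt, and_true, true_and, hj, hj', dif_pos,
        Fin.val_last, lt_irrefl, and_false, false_and, dif_neg, not_false_iff, zero_mul,
        mul_zero, Finset.sum_const_zero, add_zero, Fin.eta]
      rw [Finset.sum_comm]
    · rw [dif_neg (by tauto)]
      apply Finset.sum_eq_zero; intro j₂ _
      apply Finset.sum_eq_zero; intro i₂ _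
      rw [dif_neg (show ¬((j₂:ℕ) < k ∧ (j':ℕ) < k) from fun h => hj' h.2), mul_zero]
  · rw [dif_neg (by tauto)]
    apply Finset.sum_eq_zero; intro j₂ _
    apply Finset.sum_eq_zero; intro i₂ _
    rw [dif_neg (fun h => hj h.1), zero_mul]

lemma cornerEmbed_star (A : Matrix (Fin k × Fin k) (Fin k × Fin k) ℂ) :
    star (cornerEmbed k A) = cornerEmbed k (star A) := by
  ext ⟨i, j⟩ ⟨i', j'⟩
  simp only [Matrix.star_eq_conjTranspose, Matrix.conjTranspose_apply, cornerEmbed,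
    Matrix.of_apply]
  by_cases h : (j : ℕ) < k ∧ (j' : ℕ) < k
  · rw [dif_pos h, dif_pos ⟨h.2, h.1⟩]
  · rw [dif_neg h, dif_neg (by tauto), star_zero]

lemma cornerEmbed_one : cornerEmbed k 1 = 1 - eProj k := by
  ext ⟨i, j⟩ ⟨i', j'⟩
  simp only [cornerEmbed, Matrix.of_apply, Matrix.sub_apply, Matrix.kroneckerMap_apply,
    Matrix.one_apply, Matrix.single, Matrix.of_apply, Prod.mk.injEq]
  by_cases hj : (j : ℕ) < k <;> by_cases hj' : (j' : ℕ) < k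
  · have h1 : ¬(Fin.last k = j) := fun h => by simp [← h] at hj
    rw [dif_pos ⟨hj, hj'⟩]
    simp only [h1, false_and, if_false, mul_zero, sub_zero, Prod.ext_iff, Fin.ext_iff]
  · have hj'l : j' = Fin.last k := Fin.last_le_iff.mp (Nat.le_of_not_lt hj')
    have h1 : ¬(Fin.last k = j) := fun h => by simp [← h] at hj
    have h2 : j ≠ j' := fun h => hj' (h ▸ hj)
    rw [dif_neg (by tauto)]
    simp [h1, h2]
  · have hjl : j = Fin.last k := Fin.last_le_iff.mp (Nat.le_of_not_lt hj)
    have h1 : ¬(Fin.last k = j') := fun h => by simp [← h] at hj'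
    have h2 : j ≠ j' := fun h => hj (by rw [h]; exact hj')
    rw [dif_neg (by tauto)]
    simp [h1, h2]
  · have hjl : j = Fin.last k := Fin.last_le_iff.mp (Nat.le_of_not_lt hj)
    have hj'l : j' = Fin.last k := Fin.last_le_iff.mp (Nat.le_of_not_lt hj')
    subst hjl; subst hj'l
    rw [dif_neg (by tauto)]
    by_cases hii : i = i' <;> simp [hii]

lemma star_eProj : star (eProj k) = eProj k := by
  ext ⟨i, j⟩ ⟨i', j'⟩
  simp only [Matrix.star_eq_conjTranspose, Matrix.conjTranspose_apply,
    Matrix.kroneckerMap_apply, Matrix.one_apply, Matrix.single, Matrix.of_apply]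
  by_cases hi : i = i' <;> by_cases h1 : Fin.last k = j <;> by_cases h2 : Fin.last k = j' <;>
    simp_all [eq_comm]

lemma eProj_mul_self : eProj k * eProj k = eProj k := by
  rw [← Matrix.mul_kronecker_mul, one_mul, Matrix.single_mul_single_same, one_mul]

lemma cornerEmbed_mul_eProj (A : Matrix (Fin k × Fin k) (Fin k × Fin k) ℂ) :
    cornerEmbed k A * eProj k = 0 := by
  ext ⟨i, j⟩ ⟨i', j'⟩
  simp only [Matrix.mul_apply, Fintype.sum_prod_type, cornerEmbed, Matrix.of_apply,
    Matrix.kroneckerMap_apply, Matrix.one_apply, Matrix.single, Matrix.zero_apply]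
  apply Finset.sum_eq_zero; intro i₂ _
  apply Finset.sum_eq_zero; intro j₂ _
  by_cases h : (j₂ : ℕ) < k
  · have hl : ¬(Fin.last k = j₂) := fun he => by simp [← he] at h
    simp [hl]
  · rw [dif_neg (fun hh => h hh.2), zero_mul]

lemma eProj_mul_cornerEmbed (A : Matrix (Fin k × Fin k) (Fin k × Fin k) ℂ) :
    eProj k * cornerEmbed k A = 0 := by
  ext ⟨i, j⟩ ⟨i', j'⟩
  simp only [Matrix.mul_apply, Fintype.sum_prod_type, cornerEmbed, Matrix.of_apply,
    Matrix.kroneckerMap_apply, Matrix.one_apply, Matrix.single, Matrix.zero_apply]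
  apply Finset.sum_eq_zero; intro i₂ _
  apply Finset.sum_eq_zero; intro j₂ _
  by_cases h : (j₂ : ℕ) < k
  · have hl : ¬(Fin.last k = j₂) := fun he => by simp [← he] at h
    simp [hl]
  · rw [dif_neg (fun hh => h hh.1), mul_zero]

lemma one_sub_smul_eProj_eq_diagonal (a : ℂ) :
    (1 : Matrix (Fin k × Fin (k+1)) (Fin k × Fin (k+1)) ℂ) - a • eProj k =
      Matrix.diagonal (fun p : Fin k × Fin (k+1) => if p.2 = Fin.last k then 1 - a else 1) := by
  ext ⟨i, j⟩ ⟨i', j'⟩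
  simp only [Matrix.sub_apply, Matrix.smul_apply, Matrix.one_apply,
    Matrix.diagonal_apply, Matrix.kroneckerMap_apply, Matrix.single,
    Matrix.of_apply, smul_eq_mul, Prod.mk.injEq]
  by_cases hi : i = i' <;> by_cases hj : j = j' <;> by_cases hl : Fin.last k = j <;>
    simp_all [eq_comm]

lemma conjTranspose_kronecker_one {p q : ℕ} (x : Matrix (Fin p) (Fin p) ℂ) :
    (x ⊗ₖ (1 : Matrix (Fin q) (Fin q) ℂ)).conjTranspose =
      x.conjTranspose ⊗ₖ (1 : Matrix (Fin q) (Fin q) ℂ) := by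
  ext ⟨i, j⟩ ⟨i', j'⟩
  simp only [Matrix.conjTranspose_apply, Matrix.kroneckerMap_apply, Matrix.one_apply]
  by_cases h : j = j'
  · subst h; simp
  · simp [h, Ne.symm h]

/-! ### Norm helper lemmas -/

lemma l2_opNorm_le_bound {m n : Type*} [Fintype m] [Fintype n] [DecidableEq n]
    (A : Matrix m n ℂ) {c : ℝ} (hc : 0 ≤ c)
    (h : ∀ v : EuclideanSpace ℂ n, ‖(EuclideanSpace.equiv m ℂ).symm (A.mulVec v)‖ ≤ c * ‖v‖) :
    ‖A‖ ≤ c := by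
  rw [Matrix.l2_opNorm_def]
  exact ContinuousLinearMap.opNorm_le_bound _ hc fun v => h v

lemma l2_opNorm_diagonal_le {n : Type*} [Fintype n] [DecidableEq n] (d : n → ℂ)
    (hd : ∀ i, ‖d i‖ ≤ 1) : ‖Matrix.diagonal d‖ ≤ 1 := by
  refine l2_opNorm_le_bound _ zero_le_one fun v => ?_
  rw [one_mul]
  rw [EuclideanSpace.norm_eq, EuclideanSpace.norm_eq]
  apply Real.sqrt_le_sqrt
  apply Finset.sum_le_sum
  intro i _
  have : ((EuclideanSpace.equiv n ℂ).symm ((Matrix.diagonal d).mulVec v)) i = d i * v i := by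
    simp [Matrix.mulVec_diagonal]
  rw [this, norm_mul, mul_pow]
  have h1 : ‖d i‖ ^ 2 ≤ 1 := pow_le_one₀ (norm_nonneg _) (hd i)
  nlinarith [sq_nonneg ‖(v : n → ℂ) i‖]

lemma l2_opNorm_kronecker_one_le {p q : ℕ} (x : Matrix (Fin p) (Fin p) ℂ) :
    ‖x ⊗ₖ (1 : Matrix (Fin q) (Fin q) ℂ)‖ ≤ ‖x‖ := by
  refine l2_opNorm_le_bound _ (norm_nonneg x) fun v => ?_
  have key : ∀ (i : Fin p) (j : Fin q),
      ((x ⊗ₖ (1 : Matrix (Fin q) (Fin q) ℂ)).mulVec v) (i, j)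
        = (x.mulVec fun i' => v (i', j)) i := by
    intro i j
    simp only [Matrix.mulVec, dotProduct, Fintype.sum_prod_type,
      Matrix.kroneckerMap_apply, Matrix.one_apply]
    rw [Finset.sum_comm]
    simp [Finset.sum_ite_eq, mul_ite, ite_mul, mul_assoc]
  rw [EuclideanSpace.norm_eq, EuclideanSpace.norm_eq]
  have hsq : ∀ j : Fin q,
      ∑ i : Fin p, ‖(x.mulVec fun i' => (v : Fin p × Fin q → ℂ) (i', j)) i‖ ^ 2
        ≤ ‖x‖ ^ 2 * ∑ i : Fin p, ‖(v : Fin p × Fin q → ℂ) (i, j)‖ ^ 2 := by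
    intro j
    have hb := Matrix.l2_opNorm_mulVec x ((EuclideanSpace.equiv (Fin p) ℂ).symm
      (fun i' => (v : Fin p × Fin q → ℂ) (i', j)))
    rw [EuclideanSpace.norm_eq, EuclideanSpace.norm_eq] at hb
    have h1 : (0:ℝ) ≤ ∑ i : Fin p, ‖(x.mulVec fun i' => (v : Fin p × Fin q → ℂ) (i', j)) i‖ ^ 2 :=
      Finset.sum_nonneg fun _ _ => sq_nonneg _
    have h2 : (0:ℝ) ≤ ∑ i : Fin p, ‖(v : Fin p × Fin q → ℂ) (i, j)‖ ^ 2 :=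
      Finset.sum_nonneg fun _ _ => sq_nonneg _
    calc ∑ i : Fin p, ‖(x.mulVec fun i' => (v : Fin p × Fin q → ℂ) (i', j)) i‖ ^ 2
        = Real.sqrt (∑ i : Fin p,
            ‖(x.mulVec fun i' => (v : Fin p × Fin q → ℂ) (i', j)) i‖ ^ 2) ^ 2 := by
          rw [Real.sq_sqrt h1]
      _ ≤ (‖x‖ * Real.sqrt (∑ i : Fin p, ‖(v : Fin p × Fin q → ℂ) (i, j)‖ ^ 2)) ^ 2 := by
          apply pow_le_pow_left₀ (Real.sqrt_nonneg _) ?_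
          exact hb
      _ = ‖x‖ ^ 2 * ∑ i : Fin p, ‖(v : Fin p × Fin q → ℂ) (i, j)‖ ^ 2 := by
          rw [mul_pow, Real.sq_sqrt h2]
  calc Real.sqrt (∑ p' : Fin p × Fin q, ‖((EuclideanSpace.equiv (Fin p × Fin q) ℂ).symm
          ((x ⊗ₖ (1 : Matrix (Fin q) (Fin q) ℂ)).mulVec v)) p'‖ ^ 2)
      = Real.sqrt (∑ j : Fin q, ∑ i : Fin p,
          ‖(x.mulVec fun i' => (v : Fin p × Fin q → ℂ) (i', j)) i‖ ^ 2) := by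
        rw [Fintype.sum_prod_type, Finset.sum_comm]
        congr 1
        refine Finset.sum_congr rfl fun j _ => Finset.sum_congr rfl fun i _ => ?_
        rw [show ((EuclideanSpace.equiv (Fin p × Fin q) ℂ).symm
          ((x ⊗ₖ (1 : Matrix (Fin q) (Fin q) ℂ)).mulVec v)) (i, j)
            = ((x ⊗ₖ (1 : Matrix (Fin q) (Fin q) ℂ)).mulVec v) (i, j) from rfl, key]
    _ ≤ Real.sqrt (∑ j : Fin q, ‖x‖ ^ 2 * ∑ i : Fin p, ‖(v : Fin p × Fin q → ℂ) (i, j)‖ ^ 2) :=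
        Real.sqrt_le_sqrt (Finset.sum_le_sum fun j _ => hsq j)
    _ = ‖x‖ * Real.sqrt (∑ p' : Fin p × Fin q, ‖(v : Fin p × Fin q → ℂ) p'‖ ^ 2) := by
        rw [← Finset.mul_sum, Real.sqrt_mul (sq_nonneg _), Real.sqrt_sq (norm_nonneg _)]
        congr 1
        rw [Fintype.sum_prod_type, Finset.sum_comm]

end Helpers

/-! ### Key structural lemmas about `wPath` -/

lemma star_wPath_mul_wPath (k : ℕ) (u : ℝ → Matrix (Fin k × Fin k) (Fin k × Fin k) ℂ)
    (t : ℝ) (h : star (u t) * u t = 1) :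
    star (wPath k u t) * wPath k u t
      = 1 - ((Real.sin (Real.pi * t / 2) : ℂ) ^ 2) • eProj k := by
  set c : ℂ := (Real.cos (Real.pi * t / 2) : ℂ) with hc
  have hw : wPath k u t = cornerEmbed k (u t) + c • eProj k := rfl
  have hsw : star (wPath k u t) = cornerEmbed k (star (u t)) + c • eProj k := by
    rw [hw, star_add, cornerEmbed_star, star_smul, star_eProj]
    congr 2
    rw [hc, Complex.star_def]
    exact Complex.conj_ofReal _
  rw [hsw, hw, add_mul, mul_add, mul_add]
  rw [cornerEmbed_mul, h, cornerEmbed_one]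
  rw [mul_smul_comm, cornerEmbed_mul_eProj, smul_zero]
  rw [smul_mul_assoc, eProj_mul_cornerEmbed, smul_zero]
  rw [smul_mul_assoc, mul_smul_comm, eProj_mul_self, smul_smul]
  have hcc : c * c = 1 - (Real.sin (Real.pi * t / 2) : ℂ) ^ 2 := by
    have h1 : Real.cos (Real.pi * t / 2) * Real.cos (Real.pi * t / 2)
        = 1 - Real.sin (Real.pi * t / 2) ^ 2 := by
      nlinarith [Real.sin_sq_add_cos_sq (Real.pi * t / 2)]
    calc c * c = ((Real.cos (Real.pi * t / 2) * Real.cos (Real.pi * t / 2) : ℝ) : ℂ) := by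
          rw [hc]; norm_cast
      _ = ((1 - Real.sin (Real.pi * t / 2) ^ 2 : ℝ) : ℂ) := by rw [h1]
      _ = 1 - ((Real.sin (Real.pi * t / 2) : ℂ)) ^ 2 := by push_cast; ring
  rw [hcc, sub_smul, one_smul]
  abel

lemma norm_wPath_le_one (k : ℕ) (u : ℝ → Matrix (Fin k × Fin k) (Fin k × Fin k) ℂ)
    (t : ℝ) (h : star (u t) * u t = 1) : ‖wPath k u t‖ ≤ 1 := by
  have h2 : ‖wPath k u t‖ * ‖wPath k u t‖ = ‖star (wPath k u t) * wPath k u t‖ := by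
    rw [Matrix.star_eq_conjTranspose, Matrix.l2_opNorm_conjTranspose_mul_self]
  have h3 : ‖star (wPath k u t) * wPath k u t‖ ≤ 1 := by
    rw [star_wPath_mul_wPath k u t h, one_sub_smul_eProj_eq_diagonal]
    apply l2_opNorm_diagonal_le
    intro p
    split_ifs
    · have he : (1 - ((Real.sin (Real.pi * t / 2) : ℂ)) ^ 2)
          = ((1 - Real.sin (Real.pi * t / 2) ^ 2 : ℝ) : ℂ) := by push_cast; ring
      rw [he, Complex.norm_real, Real.norm_eq_abs, abs_le]
      constructor <;> nlinarith [Real.sin_sq_le_one (Real.pi * t / 2),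
        sq_nonneg (Real.sin (Real.pi * t / 2))]
    · simp
  nlinarith [norm_nonneg (wPath k u t)]

/-- Given `k ≥ 2` and a continuous path `u` of unitaries in `M_k ⊗ M_k` from `1` to the
flip unitary, the map `x ↦ ψ(x)`, `ψ(x)(t) = w(t)(x ⊗ 1)w(t)*`, is a linear map which is
contractive, positive, and has order zero. -/
theorem psiMap_linear_cpc_orderZero (k : ℕ) (hk : 2 ≤ k)
    (u : ℝ → Matrix (Fin k × Fin k) (Fin k × Fin k) ℂ)
    (hu_cont : ContinuousOn u (Set.Icc 0 1))
    (hu_unitary : ∀ t ∈ Set.Icc (0 : ℝ) 1, u t ∈ Matrix.unitaryGroup (Fin k × Fin k) ℂ)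
    (hu0 : u 0 = 1)
    (hu1 : u 1 = ∑ i : Fin k, ∑ j : Fin k,
       Matrix.single i j (1 : ℂ) ⊗ₖ Matrix.single j i (1 : ℂ)) :
    -- the map x ↦ ψ(x) is linear
    (∀ x y : Matrix (Fin k) (Fin k) ℂ, ∀ t ∈ Set.Icc (0 : ℝ) 1,
      psiMap k u (x + y) t = psiMap k u x t + psiMap k u y t) ∧
    (∀ (c : ℂ) (x : Matrix (Fin k) (Fin k) ℂ), ∀ t ∈ Set.Icc (0 : ℝ) 1,
      psiMap k u (c • x) t = c • psiMap k u x t) ∧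
    -- (i) ψ is contractive: ‖ψ(x)‖ ≤ ‖x‖
    (∀ x : Matrix (Fin k) (Fin k) ℂ, ∀ t ∈ Set.Icc (0 : ℝ) 1,
      ‖psiMap k u x t‖ ≤ ‖x‖) ∧
    -- (ii) ψ is positive
    (∀ x : Matrix (Fin k) (Fin k) ℂ, x.PosSemidef →
      ∀ t ∈ Set.Icc (0 : ℝ) 1, (psiMap k u x t).PosSemidef) ∧
    -- (iii) ψ has order zero
    (∀ x y : Matrix (Fin k) (Fin k) ℂ, x * y = 0 →
      ∀ t ∈ Set.Icc (0 : ℝ) 1, psiMap k u x t * psiMap k u y t = 0) := by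
  have huu : ∀ t ∈ Set.Icc (0:ℝ) 1, star (u t) * u t = 1 := fun t ht =>
    Matrix.mem_unitaryGroup_iff'.mp (hu_unitary t ht)
  refine ⟨?_, ?_, ?_, ?_, ?_⟩
  · intro x y t _
    unfold psiMap
    rw [Matrix.add_kronecker, mul_add, add_mul]
  · intro c x t _
    unfold psiMap
    rw [Matrix.smul_kronecker, mul_smul_comm, smul_mul_assoc]
  · intro x t ht
    have hw := norm_wPath_le_one k u t (huu t ht)
    have hX := l2_opNorm_kronecker_one_le (q := k + 1) x
    have hsw : ‖star (wPath k u t)‖ = ‖wPath k u t‖ := by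
      rw [Matrix.star_eq_conjTranspose, Matrix.l2_opNorm_conjTranspose]
    unfold psiMap
    calc ‖wPath k u t * (x ⊗ₖ (1 : Matrix (Fin (k + 1)) (Fin (k + 1)) ℂ))
            * star (wPath k u t)‖
        ≤ ‖wPath k u t * (x ⊗ₖ (1 : Matrix (Fin (k + 1)) (Fin (k + 1)) ℂ))‖
            * ‖star (wPath k u t)‖ := norm_mul_le _ _
      _ ≤ ‖wPath k u t‖ * ‖x ⊗ₖ (1 : Matrix (Fin (k + 1)) (Fin (k + 1)) ℂ)‖
            * ‖star (wPath k u t)‖ :=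
          mul_le_mul_of_nonneg_right (norm_mul_le _ _) (norm_nonneg _)
      _ ≤ ‖x‖ := by
          rw [hsw]
          have h1 : ‖wPath k u t‖ * ‖x ⊗ₖ (1 : Matrix (Fin (k + 1)) (Fin (k + 1)) ℂ)‖
              * ‖wPath k u t‖ ≤ 1 * ‖x‖ * 1 :=
            mul_le_mul (mul_le_mul hw hX (norm_nonneg _) zero_le_one) hw
              (norm_nonneg _) (by positivity)
          linarith
  · intro x hx t _
    unfold psiMap
    obtain ⟨B, hB⟩ : ∃ B : Matrix (Fin k) (Fin k) ℂ, x = B.conjTranspose * B := by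
      open scoped MatrixOrder in exact CStarAlgebra.nonneg_iff_eq_star_mul_self.mp hx.nonneg
    have hX : (x ⊗ₖ (1 : Matrix (Fin (k + 1)) (Fin (k + 1)) ℂ)).PosSemidef := by
      rw [hB]
      have heq : (B.conjTranspose * B) ⊗ₖ (1 : Matrix (Fin (k + 1)) (Fin (k + 1)) ℂ)
          = (B ⊗ₖ (1 : Matrix (Fin (k + 1)) (Fin (k + 1)) ℂ)).conjTranspose
            * (B ⊗ₖ (1 : Matrix (Fin (k + 1)) (Fin (k + 1)) ℂ)) := by
        rw [conjTranspose_kronecker_one, ← Matrix.mul_kronecker_mul, one_mul]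
      rw [heq]
      exact Matrix.posSemidef_conjTranspose_mul_self _
    rw [Matrix.star_eq_conjTranspose]
    exact hX.mul_mul_conjTranspose_same (wPath k u t)
  · intro x y hxy t ht
    unfold psiMap
    set W := wPath k u t with hW
    set S := star (wPath k u t) with hS
    set X := x ⊗ₖ (1 : Matrix (Fin (k + 1)) (Fin (k + 1)) ℂ) with hX
    set Y := y ⊗ₖ (1 : Matrix (Fin (k + 1)) (Fin (k + 1)) ℂ) with hY
    have hSW : S * W = 1 - ((Real.sin (Real.pi * t / 2) : ℂ) ^ 2) • eProj k :=
      star_wPath_mul_wPath k u t (huu t ht)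
    have hXY : X * Y = 0 := by
      rw [hX, hY, ← Matrix.mul_kronecker_mul, hxy, one_mul, Matrix.zero_kronecker]
    have hXEY : X * eProj k * Y = 0 := by
      rw [hX, show (x ⊗ₖ (1 : Matrix (Fin (k + 1)) (Fin (k + 1)) ℂ)) * eProj k
          = x ⊗ₖ Matrix.single (Fin.last k) (Fin.last k) (1 : ℂ) by
        rw [← Matrix.mul_kronecker_mul, mul_one, one_mul], hY,
        ← Matrix.mul_kronecker_mul, hxy, Matrix.zero_kronecker]
    have hmid : X * (S * W) * Y = 0 := by
      rw [hSW, mul_sub, mul_one, sub_mul, hXY, mul_smul_comm, smul_mul_assoc,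
        hXEY, smul_zero, sub_zero]
    have hassoc : W * X * S * (W * Y * S) = W * (X * (S * W) * Y) * S := by
      simp only [mul_assoc]
    rw [hassoc, hmid, mul_zero, zero_mul]
end
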